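/- Let p, q ∈ (1, ∞) with 1/p + 1/q = 1, let (λ_j)_{j≥1} be a sequence of nonnegative real numbers with ∑_{j=1}^∞ λ_j^{1/q} < ∞, and let α > 0. Then ∑_{j=1}^∞ λ_j/(λ_j + α) ≤ p^{−1/p} α^{−1/q} ∑_{j=1}^∞ λ_j^{1/q}. In particular, the key pointwise inequality (p α^{p/q} λ)^{1/p} ≤ α + λ holds for all α, λ ≥ 0. -/

import Mathlib

/-- The effective-dimension bound of Theorem 4.4: for Hölder conjugate exponents
`p, q ∈ (1,∞)`, nonnegative `(λ_j)` with `∑ λ_j^{1/q} < ∞` and `α > 0`,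
`∑ λ_j/(λ_j + α) ≤ p^{−1/p} α^{−1/q} ∑ λ_j^{1/q}`; in particular the pointwise
inequality `(p α^{p/q} λ)^{1/p} ≤ α + λ` holds for all `α, λ ≥ 0`. -/
theorem stmt18
    (p q : ℝ) (hp : 1 < p) (hq : 1 < q) (hpq : 1 / p + 1 / q = 1)
    (lam : ℕ → ℝ) (hlam : ∀ j, 0 ≤ lam j)
    (hsum : Summable fun j => lam j ^ ((1 : ℝ) / q))
    (α : ℝ) (hα : 0 < α) :
    ((∑' j, lam j / (lam j + α))
      ≤ p ^ (-(1 : ℝ) / p) * α ^ (-(1 : ℝ) / q) * ∑' j, lam j ^ ((1 : ℝ) / q)) ∧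
    (∀ a l : ℝ, 0 ≤ a → 0 ≤ l → (p * a ^ (p / q) * l) ^ ((1 : ℝ) / p) ≤ a + l) := by
  have hp0 : (0:ℝ) < p := lt_trans one_pos hp
  have hq0 : (0:ℝ) < q := lt_trans one_pos hq
  have hconj : p.HolderConjugate q := Real.holderConjugate_iff.mpr ⟨hp, by rw [← one_div, ← one_div]; exact hpq⟩
  -- pointwise inequality
  have key : ∀ a l : ℝ, 0 ≤ a → 0 ≤ l →
      (p * a ^ (p / q) * l) ^ ((1 : ℝ) / p) ≤ a + l := by
    intro a l ha hl
    have h1 : (p * a ^ (p / q) * l) ^ ((1 : ℝ) / p)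
        = (p * l) ^ ((1:ℝ)/p) * a ^ ((1:ℝ)/q) := by
      rw [show p * a ^ (p / q) * l = (p * l) * a ^ (p/q) by ring,
        Real.mul_rpow (by positivity) (by positivity),
        ← Real.rpow_mul ha, show p / q * (1/p) = 1/q by field_simp]
    rw [h1]
    have := Real.young_inequality_of_nonneg (a := (p*l) ^ ((1:ℝ)/p)) (b := a ^ ((1:ℝ)/q))
      (Real.rpow_nonneg (by positivity) _) (Real.rpow_nonneg ha _) hconj
    have h2 : ((p * l) ^ ((1:ℝ)/p)) ^ p = p * l := by
      rw [← Real.rpow_mul (by positivity), one_div, inv_mul_cancel₀ hp0.ne', Real.rpow_one]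
    have h3 : (a ^ ((1:ℝ)/q)) ^ q = a := by
      rw [← Real.rpow_mul ha, one_div, inv_mul_cancel₀ hq0.ne', Real.rpow_one]
    rw [h2, h3] at this
    have : (p*l)^((1:ℝ)/p) * a^((1:ℝ)/q) ≤ l + a / q := by
      calc _ ≤ (p*l)/p + a/q := this
        _ = l + a/q := by field_simp
    refine this.trans ?_
    have : a / q ≤ a := by
      rw [div_le_iff₀ hq0]
      nlinarith
    linarith
  refine ⟨?_, key⟩
  set C : ℝ := p ^ (-(1 : ℝ) / p) * α ^ (-(1 : ℝ) / q) with hC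
  have hCpos : 0 < C := by positivity
  -- pointwise bound on terms
  have hterm : ∀ j, lam j / (lam j + α) ≤ C * lam j ^ ((1:ℝ)/q) := by
    intro j
    set l := lam j with hl
    have hl0 : 0 ≤ l := hlam j
    have hla : 0 < l + α := by linarith
    rw [div_le_iff₀ hla]
    have hsplit : l = l ^ ((1:ℝ)/q) * l ^ ((1:ℝ)/p) := by
      rw [← Real.rpow_add' hl0 (by rw [add_comm]; rw [hpq]; norm_num)]
      rw [show (1:ℝ)/q + 1/p = 1 by rw [add_comm]; exact hpq, Real.rpow_one]
    have hkey := key α l hα.le hl0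
    have hrw : (p * α ^ (p / q) * l) ^ ((1 : ℝ) / p)
        = p ^ ((1:ℝ)/p) * α ^ ((1:ℝ)/q) * l ^ ((1:ℝ)/p) := by
      rw [Real.mul_rpow (by positivity) hl0, Real.mul_rpow hp0.le (by positivity),
        ← Real.rpow_mul hα.le, show p / q * (1/p) = 1/q by field_simp]
    rw [hrw] at hkey
    -- goal: l ≤ C * l^{1/q} * (l + α)
    have hCinv : p ^ ((1:ℝ)/p) * α ^ ((1:ℝ)/q) * C = 1 := by
      rw [hC, show p ^ ((1:ℝ)/p) * α ^ ((1:ℝ)/q) * (p ^ (-(1:ℝ)/p) * α ^ (-(1:ℝ)/q))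
          = p ^ ((1:ℝ)/p) * p ^ (-(1:ℝ)/p) * (α ^ ((1:ℝ)/q) * α ^ (-(1:ℝ)/q)) by ring,
        ← Real.rpow_add hp0, ← Real.rpow_add hα,
        show (1:ℝ)/p + -1/p = 0 by ring, show (1:ℝ)/q + -1/q = 0 by ring,
        Real.rpow_zero, Real.rpow_zero, one_mul]
    have hP : 0 < p ^ ((1:ℝ)/p) * α ^ ((1:ℝ)/q) := by positivity
    have hlp : l ^ ((1:ℝ)/p) ≤ C * (l + α) := by
      have h := mul_le_mul_of_nonneg_left hkey hCpos.le
      rw [show C * (p ^ ((1:ℝ)/p) * α ^ ((1:ℝ)/q) * l ^ ((1:ℝ)/p))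
          = p ^ ((1:ℝ)/p) * α ^ ((1:ℝ)/q) * C * l ^ ((1:ℝ)/p) by ring,
        hCinv, one_mul] at h
      linarith
    calc l = l ^ ((1:ℝ)/q) * l ^ ((1:ℝ)/p) := hsplit
      _ ≤ l ^ ((1:ℝ)/q) * (C * (l + α)) :=
          mul_le_mul_of_nonneg_left hlp (Real.rpow_nonneg hl0 _)
      _ = C * l ^ ((1:ℝ)/q) * (l + α) := by ring
  have hsum2 : Summable fun j => C * lam j ^ ((1:ℝ)/q) := hsum.mul_left C
  have hsum1 : Summable fun j => lam j / (lam j + α) := by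
    apply Summable.of_nonneg_of_le (fun j => div_nonneg (hlam j) (by linarith [hlam j])) hterm hsum2
  calc (∑' j, lam j / (lam j + α)) ≤ ∑' j, C * lam j ^ ((1:ℝ)/q) :=
        Summable.tsum_le_tsum hterm hsum1 hsum2
    _ = C * ∑' j, lam j ^ ((1:ℝ)/q) := tsum_mul_left
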